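/- There exists a pure partial plane of order 6 of size 25. Concretely, on the point set {0,1,...,42}, the collection of 25 lines {0,1,2,3,4,5,6}, {0,7,8,9,10,11,12}, {0,13,14,15,16,17,18}, {0,19,20,21,22,23,24}, {0,25,26,27,28,29,30}, {0,31,32,33,34,35,36}, {0,37,38,39,40,41,42}, {1,7,13,19,25,31,37}, {1,8,14,20,26,32,38}, {1,9,15,21,27,33,39}, {1,10,16,22,28,34,40}, {1,11,17,23,29,35,41}, {1,12,18,24,30,36,42}, {2,7,14,21,28,35,42}, {2,8,13,22,27,36,41}, {2,9,16,23,30,31,38}, {2,10,15,24,29,32,37}, {2,11,18,19,26,34,39}, {2,12,17,20,25,33,40}, {3,7,15,20,30,34,41}, {3,9,14,19,29,36,40}, {3,10,13,23,26,33,42}, {4,7,18,22,29,33,38}, {4,11,13,21,30,32,40}, {4,12,14,23,27,34,37} is a pure partial plane of order 6. -/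

import Mathlib

/-- A pure partial plane (PPP) of order `n`: a finite collection of distinct lines,
each an `(n+1)`-element subset of a point set of `n^2+n+1` points, such that any two
distinct lines intersect in exactly one point. -/
def IsPPP (n : ℕ) (L : Finset (Finset (Fin (n ^ 2 + n + 1)))) : Prop :=
  (∀ ℓ ∈ L, ℓ.card = n + 1) ∧
    ∀ ℓ₁ ∈ L, ∀ ℓ₂ ∈ L, ℓ₁ ≠ ℓ₂ → (ℓ₁ ∩ ℓ₂).card = 1

/-- The degree of a point: the number of lines of the collection containing it. -/
def ppDeg {n : ℕ} (L : Finset (Finset (Fin (n ^ 2 + n + 1))))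
    (p : Fin (n ^ 2 + n + 1)) : ℕ :=
  (L.filter fun ℓ => p ∈ ℓ).card

/-- The explicit 25 lines on the point set {0,...,42}. -/
def lines25 : Finset (Finset (Fin (6 ^ 2 + 6 + 1))) :=
  {{0, 1, 2, 3, 4, 5, 6},
     {0, 7, 8, 9, 10, 11, 12},
     {0, 13, 14, 15, 16, 17, 18},
     {0, 19, 20, 21, 22, 23, 24},
     {0, 25, 26, 27, 28, 29, 30},
     {0, 31, 32, 33, 34, 35, 36},
     {0, 37, 38, 39, 40, 41, 42},
     {1, 7, 13, 19, 25, 31, 37},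
     {1, 8, 14, 20, 26, 32, 38},
     {1, 9, 15, 21, 27, 33, 39},
     {1, 10, 16, 22, 28, 34, 40},
     {1, 11, 17, 23, 29, 35, 41},
     {1, 12, 18, 24, 30, 36, 42},
     {2, 7, 14, 21, 28, 35, 42},
     {2, 8, 13, 22, 27, 36, 41},
     {2, 9, 16, 23, 30, 31, 38},
     {2, 10, 15, 24, 29, 32, 37},
     {2, 11, 18, 19, 26, 34, 39},
     {2, 12, 17, 20, 25, 33, 40},
     {3, 7, 15, 20, 30, 34, 41},
     {3, 9, 14, 19, 29, 36, 40},
     {3, 10, 13, 23, 26, 33, 42},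
     {4, 7, 18, 22, 29, 33, 38},
     {4, 11, 13, 21, 30, 32, 40},
     {4, 12, 14, 23, 27, 34, 37}}

def L0 : Finset (Fin (6 ^ 2 + 6 + 1)) := {0, 1, 2, 3, 4, 5, 6}
def L1 : Finset (Fin (6 ^ 2 + 6 + 1)) := {0, 7, 8, 9, 10, 11, 12}
def L2 : Finset (Fin (6 ^ 2 + 6 + 1)) := {0, 13, 14, 15, 16, 17, 18}
def L3 : Finset (Fin (6 ^ 2 + 6 + 1)) := {0, 19, 20, 21, 22, 23, 24}
def L4 : Finset (Fin (6 ^ 2 + 6 + 1)) := {0, 25, 26, 27, 28, 29, 30}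
def L5 : Finset (Fin (6 ^ 2 + 6 + 1)) := {0, 31, 32, 33, 34, 35, 36}
def L6 : Finset (Fin (6 ^ 2 + 6 + 1)) := {0, 37, 38, 39, 40, 41, 42}
def L7 : Finset (Fin (6 ^ 2 + 6 + 1)) := {1, 7, 13, 19, 25, 31, 37}
def L8 : Finset (Fin (6 ^ 2 + 6 + 1)) := {1, 8, 14, 20, 26, 32, 38}
def L9 : Finset (Fin (6 ^ 2 + 6 + 1)) := {1, 9, 15, 21, 27, 33, 39}
def L10 : Finset (Fin (6 ^ 2 + 6 + 1)) := {1, 10, 16, 22, 28, 34, 40}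
def L11 : Finset (Fin (6 ^ 2 + 6 + 1)) := {1, 11, 17, 23, 29, 35, 41}
def L12 : Finset (Fin (6 ^ 2 + 6 + 1)) := {1, 12, 18, 24, 30, 36, 42}
def L13 : Finset (Fin (6 ^ 2 + 6 + 1)) := {2, 7, 14, 21, 28, 35, 42}
def L14 : Finset (Fin (6 ^ 2 + 6 + 1)) := {2, 8, 13, 22, 27, 36, 41}
def L15 : Finset (Fin (6 ^ 2 + 6 + 1)) := {2, 9, 16, 23, 30, 31, 38}
def L16 : Finset (Fin (6 ^ 2 + 6 + 1)) := {2, 10, 15, 24, 29, 32, 37}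
def L17 : Finset (Fin (6 ^ 2 + 6 + 1)) := {2, 11, 18, 19, 26, 34, 39}
def L18 : Finset (Fin (6 ^ 2 + 6 + 1)) := {2, 12, 17, 20, 25, 33, 40}
def L19 : Finset (Fin (6 ^ 2 + 6 + 1)) := {3, 7, 15, 20, 30, 34, 41}
def L20 : Finset (Fin (6 ^ 2 + 6 + 1)) := {3, 9, 14, 19, 29, 36, 40}
def L21 : Finset (Fin (6 ^ 2 + 6 + 1)) := {3, 10, 13, 23, 26, 33, 42}
def L22 : Finset (Fin (6 ^ 2 + 6 + 1)) := {4, 7, 18, 22, 29, 33, 38}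
def L23 : Finset (Fin (6 ^ 2 + 6 + 1)) := {4, 11, 13, 21, 30, 32, 40}
def L24 : Finset (Fin (6 ^ 2 + 6 + 1)) := {4, 12, 14, 23, 27, 34, 37}

/-- There exists a pure partial plane of order 6 of size 25: the explicit collection
`lines25` of 25 lines is a pure partial plane of order 6 with 25 lines. -/
lemma mem_lines25 {ℓ : Finset (Fin (6 ^ 2 + 6 + 1))} (h : ℓ ∈ lines25) :
    ℓ = L0 ∨
    ℓ = L1 ∨
    ℓ = L2 ∨
    ℓ = L3 ∨
    ℓ = L4 ∨
    ℓ = L5 ∨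
    ℓ = L6 ∨
    ℓ = L7 ∨
    ℓ = L8 ∨
    ℓ = L9 ∨
    ℓ = L10 ∨
    ℓ = L11 ∨
    ℓ = L12 ∨
    ℓ = L13 ∨
    ℓ = L14 ∨
    ℓ = L15 ∨
    ℓ = L16 ∨
    ℓ = L17 ∨
    ℓ = L18 ∨
    ℓ = L19 ∨
    ℓ = L20 ∨
    ℓ = L21 ∨
    ℓ = L22 ∨
    ℓ = L23 ∨
    ℓ = L24 := by
  simpa [lines25, Finset.mem_insert, L0, L1, L2, L3, L4, L5, L6, L7, L8, L9, L10, L11, L12, L13, L14, L15, L16, L17, L18, L19, L20, L21, L22, L23, L24] using h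

set_option maxRecDepth 10000 in
set_option maxHeartbeats 1600000 in
theorem exists_ppp_order_six_size_25 : IsPPP 6 lines25 ∧ lines25.card = 25 := by
  refine ⟨⟨?_, ?_⟩, ?_⟩
  · intro ℓ h
    rcases mem_lines25 h with rfl|rfl|rfl|rfl|rfl|rfl|rfl|rfl|rfl|rfl|rfl|rfl|rfl|rfl|rfl|rfl|rfl|rfl|rfl|rfl|rfl|rfl|rfl|rfl|rfl <;> decide
  · intro ℓ₁ h₁ ℓ₂ h₂ hne
    rcases mem_lines25 h₁ with rfl|rfl|rfl|rfl|rfl|rfl|rfl|rfl|rfl|rfl|rfl|rfl|rfl|rfl|rfl|rfl|rfl|rfl|rfl|rfl|rfl|rfl|rfl|rfl|rfl <;>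
      rcases mem_lines25 h₂ with rfl|rfl|rfl|rfl|rfl|rfl|rfl|rfl|rfl|rfl|rfl|rfl|rfl|rfl|rfl|rfl|rfl|rfl|rfl|rfl|rfl|rfl|rfl|rfl|rfl <;>
      first
        | decide
        | exact absurd rfl hne
  · decide
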